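/- In the limit u_2 → u_1 (with -ν < u_3 < u_1 fixed), the Whitham speeds satisfy λ_1(u_1,u_1,u_3) = λ_2(u_1,u_1,u_3) = 2u_1 + u_3 + 2ν and λ_3(u_1,u_1,u_3) = 3u_3 + 2ν. -/

import Mathlib

open Real Filter Topology Set intervalIntegral

/-- Complete elliptic integral of the first kind (parameter = modulus squared). -/
noncomputable def Kel (s : ℝ) : ℝ :=
  ∫ θ in (0:ℝ)..(π / 2), 1 / Real.sqrt (1 - s * Real.sin θ ^ 2)

/-- Complete elliptic integral of the second kind (parameter = modulus squared). -/
noncomputable def Eel (s : ℝ) : ℝ :=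
  ∫ θ in (0:ℝ)..(π / 2), Real.sqrt (1 - s * Real.sin θ ^ 2)

/-- Complete elliptic integral of the third kind (parameter = modulus squared). -/
noncomputable def Pel (ρ s : ℝ) : ℝ :=
  ∫ θ in (0:ℝ)..(π / 2),
    1 / ((1 - ρ * Real.sin θ ^ 2) * Real.sqrt (1 - s * Real.sin θ ^ 2))

/-- The modulus-squared parameter `s = (u_2-u_3)(u_1+ν)/((u_1-u_3)(u_2+ν))`. -/
noncomputable def sCH (ν u1 u2 u3 : ℝ) : ℝ :=
  (u2 - u3) * (u1 + ν) / ((u1 - u3) * (u2 + ν))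

/-- The parameter `ρ = (u_2-u_3)/(u_2+ν)`. -/
noncomputable def rCH (ν u2 u3 : ℝ) : ℝ := (u2 - u3) / (u2 + ν)

section aux
variable {s ρ : ℝ}

lemma Xpos (hs0 : 0 ≤ s) (hs1 : s < 1) (θ : ℝ) : 0 < 1 - s * Real.sin θ ^ 2 := by
  nlinarith [Real.sin_sq_le_one θ, sq_nonneg (Real.sin θ)]

lemma sqrtXpos (hs0 : 0 ≤ s) (hs1 : s < 1) (θ : ℝ) :
    0 < Real.sqrt (1 - s * Real.sin θ ^ 2) :=
  Real.sqrt_pos.mpr (Xpos hs0 hs1 θ)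

lemma contX : Continuous fun θ : ℝ => 1 - s * Real.sin θ ^ 2 := by fun_prop

lemma contSqrtX : Continuous fun θ : ℝ => Real.sqrt (1 - s * Real.sin θ ^ 2) := by
  fun_prop

lemma contKint (hs0 : 0 ≤ s) (hs1 : s < 1) :
    Continuous fun θ : ℝ => 1 / Real.sqrt (1 - s * Real.sin θ ^ 2) :=
  continuous_const.div contSqrtX (fun θ => (sqrtXpos hs0 hs1 θ).ne')

lemma contPint (hs0 : 0 ≤ s) (hs1 : s < 1) (hρ0 : 0 ≤ ρ) (hρ1 : ρ < 1) :
    Continuous fun θ : ℝ =>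
      1 / ((1 - ρ * Real.sin θ ^ 2) * Real.sqrt (1 - s * Real.sin θ ^ 2)) :=
  continuous_const.div (contX.mul contSqrtX)
    (fun θ => (mul_pos (Xpos hρ0 hρ1 θ) (sqrtXpos hs0 hs1 θ)).ne')

-- basic sqrt facts on [0, π/2]
lemma cos_le_sqrtX (hs0 : 0 ≤ s) (hs1 : s < 1) {θ : ℝ} (hθ : θ ∈ Icc 0 (π/2)) :
    Real.cos θ ≤ Real.sqrt (1 - s * Real.sin θ ^ 2) := by
  have hc : 0 ≤ Real.cos θ := Real.cos_nonneg_of_mem_Icc ⟨by linarith [hθ.1, pi_pos.le], hθ.2⟩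
  have h : Real.cos θ ^ 2 ≤ 1 - s * Real.sin θ ^ 2 := by
    nlinarith [Real.sin_sq_add_cos_sq θ, sq_nonneg (Real.sin θ)]
  calc Real.cos θ = Real.sqrt (Real.cos θ ^ 2) := (Real.sqrt_sq hc).symm
    _ ≤ _ := Real.sqrt_le_sqrt h

lemma sqrt_one_sub_le_sqrtX (hs0 : 0 ≤ s) (hs1 : s < 1) (θ : ℝ) :
    Real.sqrt (1 - s) ≤ Real.sqrt (1 - s * Real.sin θ ^ 2) := by
  apply Real.sqrt_le_sqrt
  nlinarith [Real.sin_sq_le_one θ]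

lemma sqrtX_le_one (hs0 : 0 ≤ s) (θ : ℝ) :
    Real.sqrt (1 - s * Real.sin θ ^ 2) ≤ 1 := by
  apply Real.sqrt_le_one.mpr
  nlinarith [sq_nonneg (Real.sin θ)]

lemma sqrtX_le_cos_add (hs0 : 0 ≤ s) (hs1 : s < 1) {θ : ℝ} (hθ : θ ∈ Icc 0 (π/2)) :
    Real.sqrt (1 - s * Real.sin θ ^ 2) ≤ Real.cos θ + Real.sqrt (1 - s) := by
  have hc : 0 ≤ Real.cos θ := Real.cos_nonneg_of_mem_Icc ⟨by linarith [hθ.1, pi_pos.le], hθ.2⟩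
  have hr : 0 ≤ Real.sqrt (1 - s) := Real.sqrt_nonneg _
  have hr2 : Real.sqrt (1 - s) ^ 2 = 1 - s := Real.sq_sqrt (by linarith)
  have h : 1 - s * Real.sin θ ^ 2 ≤ (Real.cos θ + Real.sqrt (1 - s)) ^ 2 := by
    nlinarith [Real.sin_sq_add_cos_sq θ, Real.sin_sq_le_one θ, mul_nonneg hc hr]
  calc Real.sqrt (1 - s * Real.sin θ ^ 2) ≤ Real.sqrt ((Real.cos θ + Real.sqrt (1 - s)) ^ 2) :=
        Real.sqrt_le_sqrt h
    _ = _ := Real.sqrt_sq (by positivity)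

end aux

section bounds
variable {s ρ : ℝ}

lemma pi_half_nonneg : (0:ℝ) ≤ π/2 := by positivity

lemma Kel_ge (hs0 : 0 ≤ s) (hs1 : s < 1) : π/2 ≤ Kel s := by
  have h := intervalIntegral.integral_mono_on (μ := MeasureTheory.volume) (a := (0:ℝ)) (b := π/2) pi_half_nonneg
    ((continuous_const (y := (1:ℝ))).intervalIntegrable _ _)
    ((contKint hs0 hs1).intervalIntegrable _ _)
    (fun θ hθ => by
      rw [le_div_iff₀ (sqrtXpos hs0 hs1 θ)]
      simpa using sqrtX_le_one hs0 θ)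
  simpa [Kel] using h

lemma Kel_le (hs0 : 0 ≤ s) (hs1 : s < 1) : Kel s ≤ (π/2) / Real.sqrt (1 - s) := by
  have hr : 0 < Real.sqrt (1 - s) := Real.sqrt_pos.mpr (by linarith)
  have h := intervalIntegral.integral_mono_on (μ := MeasureTheory.volume) (a := (0:ℝ)) (b := π/2) pi_half_nonneg
    ((contKint hs0 hs1).intervalIntegrable _ _)
    ((continuous_const (y := 1 / Real.sqrt (1 - s))).intervalIntegrable _ _)
    (fun θ hθ =>
      one_div_le_one_div_of_le hr (sqrt_one_sub_le_sqrtX hs0 hs1 θ))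
  have h2 : Kel s ≤ (π/2) * (1 / Real.sqrt (1 - s)) := by simpa [Kel] using h
  rw [div_eq_mul_one_div]
  exact h2

lemma Eel_ge (hs0 : 0 ≤ s) (hs1 : s < 1) : 1 ≤ Eel s := by
  have h := intervalIntegral.integral_mono_on (μ := MeasureTheory.volume) (a := (0:ℝ)) (b := π/2) pi_half_nonneg
    (Real.continuous_cos.intervalIntegrable _ _)
    (contSqrtX.intervalIntegrable _ _)
    (fun θ hθ => cos_le_sqrtX hs0 hs1 hθ)
  simpa [Eel, integral_cos] using h

lemma Eel_le (hs0 : 0 ≤ s) (hs1 : s < 1) : Eel s ≤ 1 + (π/2) * Real.sqrt (1 - s) := by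
  have h := intervalIntegral.integral_mono_on (μ := MeasureTheory.volume) (a := (0:ℝ)) (b := π/2) pi_half_nonneg
    (contSqrtX.intervalIntegrable _ _)
    ((Real.continuous_cos.add continuous_const).intervalIntegrable _ _)
    (fun θ hθ => sqrtX_le_cos_add hs0 hs1 hθ)
  have h2 : (∫ θ in (0:ℝ)..(π/2), (Real.cos θ + Real.sqrt (1 - s)))
      = 1 + (π/2) * Real.sqrt (1 - s) := by
    rw [intervalIntegral.integral_add (Real.continuous_cos.intervalIntegrable _ _)
      ((continuous_const (y := Real.sqrt (1-s))).intervalIntegrable _ _)]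
    simp [integral_cos]
  rw [Eel]
  simp only [Pi.add_apply] at h
  rw [h2] at h
  exact h

lemma Eel_pos (hs0 : 0 ≤ s) (hs1 : s < 1) : 0 < Eel s :=
  lt_of_lt_of_le one_pos (Eel_ge hs0 hs1)

lemma Pel_nonneg (hs0 : 0 ≤ s) (hs1 : s < 1) (hρ0 : 0 ≤ ρ) (hρ1 : ρ < 1) :
    0 ≤ Pel ρ s := by
  apply intervalIntegral.integral_nonneg pi_half_nonneg
  intro θ hθ
  have := Xpos hρ0 hρ1 θ
  have := sqrtXpos hs0 hs1 θ
  positivity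

lemma Pel_le_Kel (hs0 : 0 ≤ s) (hs1 : s < 1) (hρ0 : 0 ≤ ρ) (hρ1 : ρ < 1) :
    Pel ρ s ≤ Kel s / (1 - ρ) := by
  have hρ : 0 < 1 - ρ := by linarith
  have h := intervalIntegral.integral_mono_on (μ := MeasureTheory.volume) (a := (0:ℝ)) (b := π/2) pi_half_nonneg
    ((contPint hs0 hs1 hρ0 hρ1).intervalIntegrable _ _)
    ((continuous_const.mul (contKint hs0 hs1)).intervalIntegrable _ _)
    (fun θ hθ => by
      have hq := sqrtXpos hs0 hs1 θ
      have hY := Xpos hρ0 hρ1 θ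
      have hY2 : 1 - ρ ≤ 1 - ρ * Real.sin θ ^ 2 := by
        nlinarith [Real.sin_sq_le_one θ, sq_nonneg (Real.sin θ)]
      calc 1 / ((1 - ρ * Real.sin θ ^ 2) * Real.sqrt (1 - s * Real.sin θ ^ 2))
          ≤ 1 / ((1-ρ) * Real.sqrt (1 - s * Real.sin θ ^ 2)) :=
            one_div_le_one_div_of_le (mul_pos hρ hq)
              (mul_le_mul_of_nonneg_right hY2 hq.le)
        _ = (1/(1-ρ)) * (1 / Real.sqrt (1 - s * Real.sin θ ^ 2)) :=
            (one_div_mul_one_div _ _).symm)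
  have h2 : Pel ρ s ≤ (1/(1-ρ)) * Kel s := by
    simpa [Pel, Kel, intervalIntegral.integral_const_mul] using h
  rw [div_eq_mul_one_div, mul_comm]
  exact h2

lemma Pel_ge (hs0 : 0 ≤ s) (hs1 : s < 1) (hρ0 : 0 ≤ ρ) (hρ1 : ρ < 1) :
    Kel s / (1 - ρ) - ρ/(1-ρ)^2 ≤ Pel ρ s := by
  have hρ : 0 < 1 - ρ := by linarith
  have h := intervalIntegral.integral_mono_on (μ := MeasureTheory.volume) (a := (0:ℝ)) (b := π/2) pi_half_nonneg
    (((continuous_const.mul (contKint hs0 hs1)).sub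
      (continuous_const.mul Real.continuous_cos)).intervalIntegrable _ _)
    ((contPint hs0 hs1 hρ0 hρ1).intervalIntegrable _ _)
    (fun θ hθ => by
      have hq := sqrtXpos hs0 hs1 θ
      have hY := Xpos hρ0 hρ1 θ
      have hc : 0 ≤ Real.cos θ :=
        Real.cos_nonneg_of_mem_Icc ⟨by linarith [hθ.1, pi_pos.le], hθ.2⟩
      have hcq : Real.cos θ ≤ Real.sqrt (1 - s * Real.sin θ ^ 2) := cos_le_sqrtX hs0 hs1 hθ
      have hY2 : 1 - ρ ≤ 1 - ρ * Real.sin θ ^ 2 := by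
        nlinarith [Real.sin_sq_le_one θ, sq_nonneg (Real.sin θ)]
      have hYc : 1 - ρ * Real.sin θ ^ 2 - (1-ρ) = ρ * Real.cos θ ^ 2 := by
        nlinarith [Real.sin_sq_add_cos_sq θ]
      have h1 : (1-ρ) * Real.cos θ ≤ (1 - ρ * Real.sin θ ^ 2) * Real.sqrt (1 - s * Real.sin θ ^ 2) :=
        mul_le_mul hY2 hcq hc hY.le
      have key : 1/((1-ρ) * Real.sqrt (1 - s * Real.sin θ ^ 2))
          - 1/((1 - ρ * Real.sin θ ^ 2) * Real.sqrt (1 - s * Real.sin θ ^ 2))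
          ≤ ρ * Real.cos θ / (1-ρ)^2 := by
        rw [div_sub_div _ _ (mul_pos hρ hq).ne' (mul_pos hY hq).ne',
          div_le_div_iff₀ (mul_pos (mul_pos hρ hq) (mul_pos hY hq)) (by positivity)]
        have hYcq : (1 - ρ * Real.sin θ ^ 2) * Real.sqrt (1 - s * Real.sin θ ^ 2)
            - (1-ρ) * Real.sqrt (1 - s * Real.sin θ ^ 2)
            = ρ * Real.cos θ ^ 2 * Real.sqrt (1 - s * Real.sin θ ^ 2) := by
          rw [show ρ * Real.cos θ ^ 2 = 1 - ρ * Real.sin θ ^ 2 - (1-ρ) from hYc.symm]; ring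
        have hfin : ρ * Real.cos θ * ((1-ρ) * Real.sqrt (1 - s * Real.sin θ ^ 2)) * ((1-ρ) * Real.cos θ)
            ≤ ρ * Real.cos θ * ((1-ρ) * Real.sqrt (1 - s * Real.sin θ ^ 2)) *
              ((1 - ρ * Real.sin θ ^ 2) * Real.sqrt (1 - s * Real.sin θ ^ 2)) :=
          mul_le_mul_of_nonneg_left h1 (by positivity)
        nlinarith [hfin, hYcq, hq, mul_pos hρ hq]
      have e1 : (1:ℝ)/(1-ρ) * (1 / Real.sqrt (1 - s * Real.sin θ ^ 2))
          = 1/((1-ρ) * Real.sqrt (1 - s * Real.sin θ ^ 2)) := one_div_mul_one_div _ _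
      have e2 : ρ/(1-ρ)^2 * Real.cos θ = ρ * Real.cos θ/(1-ρ)^2 := by ring
      show (1/(1-ρ)) * (1 / Real.sqrt (1 - s * Real.sin θ ^ 2)) - (ρ/(1-ρ)^2) * Real.cos θ ≤ _
      rw [e1, e2]
      linarith [key])
  have h2 : (∫ θ in (0:ℝ)..(π/2),
      ((1/(1-ρ)) * (1 / Real.sqrt (1 - s * Real.sin θ ^ 2)) - (ρ/(1-ρ)^2) * Real.cos θ))
      = Kel s / (1 - ρ) - ρ/(1-ρ)^2 := by
    rw [intervalIntegral.integral_sub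
      (f := fun θ => (1/(1-ρ)) * (1 / Real.sqrt (1 - s * Real.sin θ ^ 2)))
      (g := fun θ => (ρ/(1-ρ)^2) * Real.cos θ)
      ((continuous_const.mul (contKint hs0 hs1)).intervalIntegrable _ _)
      ((continuous_const.mul Real.continuous_cos).intervalIntegrable _ _),
      intervalIntegral.integral_const_mul, intervalIntegral.integral_const_mul]
    simp [Kel, integral_cos]
    ring
  rw [Pel]
  simp only [Pi.sub_apply, Pi.mul_apply] at h
  rw [h2] at h
  exact h

end bounds

section more
variable {s ρ : ℝ}

lemma KsubE_le (hs0 : 0 ≤ s) (hs1 : s < 1) : Kel s - Eel s ≤ s * Kel s := by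
  have h1 : Kel s - Eel s = ∫ θ in (0:ℝ)..(π/2),
      (1 / Real.sqrt (1 - s * Real.sin θ ^ 2) - Real.sqrt (1 - s * Real.sin θ ^ 2)) := by
    rw [intervalIntegral.integral_sub ((contKint hs0 hs1).intervalIntegrable _ _)
      (contSqrtX.intervalIntegrable _ _)]
    rfl
  have h := intervalIntegral.integral_mono_on (μ := MeasureTheory.volume) (a := (0:ℝ))
    (b := π/2)
    (f := fun θ => 1 / Real.sqrt (1 - s * Real.sin θ ^ 2) - Real.sqrt (1 - s * Real.sin θ ^ 2))
    (g := fun θ => s * (1 / Real.sqrt (1 - s * Real.sin θ ^ 2)))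
    pi_half_nonneg
    (((contKint hs0 hs1).sub contSqrtX).intervalIntegrable _ _)
    ((continuous_const.mul (contKint hs0 hs1)).intervalIntegrable _ _)
    (fun θ hθ => by
      beta_reduce
      have hq := sqrtXpos hs0 hs1 θ
      have hq2 : Real.sqrt (1 - s * Real.sin θ ^ 2) ^ 2 = 1 - s * Real.sin θ ^ 2 :=
        Real.sq_sqrt (Xpos hs0 hs1 θ).le
      have hsin : s * Real.sin θ ^ 2 ≤ s := by nlinarith [Real.sin_sq_le_one θ]
      rw [sub_le_iff_le_add, mul_one_div, div_add' _ _ _ hq.ne', div_le_div_iff₀ hq hq]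
      nlinarith [hq])
  rw [h1]
  have h2 : (∫ θ in (0:ℝ)..(π/2), s * (1 / Real.sqrt (1 - s * Real.sin θ ^ 2))) = s * Kel s := by
    rw [intervalIntegral.integral_const_mul]; rfl
  rw [h2] at h
  exact h

lemma KsubE_ge (hs0 : 0 ≤ s) (hs1 : s < 1) : s * Kel s - s ≤ Kel s - Eel s := by
  have h1 : Kel s - Eel s = ∫ θ in (0:ℝ)..(π/2),
      (1 / Real.sqrt (1 - s * Real.sin θ ^ 2) - Real.sqrt (1 - s * Real.sin θ ^ 2)) := by
    rw [intervalIntegral.integral_sub ((contKint hs0 hs1).intervalIntegrable _ _)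
      (contSqrtX.intervalIntegrable _ _)]
    rfl
  have h := intervalIntegral.integral_mono_on (μ := MeasureTheory.volume) (a := (0:ℝ))
    (b := π/2) pi_half_nonneg
    (f := fun θ => s * (1 / Real.sqrt (1 - s * Real.sin θ ^ 2)) - s * Real.cos θ)
    (g := fun θ => 1 / Real.sqrt (1 - s * Real.sin θ ^ 2) - Real.sqrt (1 - s * Real.sin θ ^ 2))
    (((continuous_const.mul (contKint hs0 hs1)).sub
      (continuous_const.mul Real.continuous_cos)).intervalIntegrable _ _)
    (((contKint hs0 hs1).sub contSqrtX).intervalIntegrable _ _)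
    (fun θ hθ => by
      beta_reduce
      have hq := sqrtXpos hs0 hs1 θ
      have hq2 : Real.sqrt (1 - s * Real.sin θ ^ 2) ^ 2 = 1 - s * Real.sin θ ^ 2 :=
        Real.sq_sqrt (Xpos hs0 hs1 θ).le
      have hc : 0 ≤ Real.cos θ :=
        Real.cos_nonneg_of_mem_Icc ⟨by linarith [hθ.1, pi_pos.le], hθ.2⟩
      have hcq : Real.cos θ ≤ Real.sqrt (1 - s * Real.sin θ ^ 2) := cos_le_sqrtX hs0 hs1 hθ
      have hsc : Real.sin θ ^ 2 + Real.cos θ ^ 2 = 1 := Real.sin_sq_add_cos_sq θ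
      -- goal : s * (1/√X) - s * cos θ ≤ 1/√X - √X
      -- i.e. s cos² / √X ≤ s cos θ   (after:  (s-1)/√X + √X = (s-1+X)/√X = s cos²/√X)
      have key : s * Real.cos θ ^ 2 / Real.sqrt (1 - s * Real.sin θ ^ 2) ≤ s * Real.cos θ := by
        rw [div_le_iff₀ hq]
        nlinarith [mul_le_mul_of_nonneg_left (mul_le_mul_of_nonneg_left hcq hc) hs0]
      have e1 : s * (1 / Real.sqrt (1 - s * Real.sin θ ^ 2))
          - (1 / Real.sqrt (1 - s * Real.sin θ ^ 2) - Real.sqrt (1 - s * Real.sin θ ^ 2))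
          = s * Real.cos θ ^ 2 / Real.sqrt (1 - s * Real.sin θ ^ 2) := by
        field_simp
        nlinarith [hq2, hsc]
      linarith [key, e1.le, e1.ge])
  rw [h1]
  have h2 : (∫ θ in (0:ℝ)..(π/2),
      (s * (1 / Real.sqrt (1 - s * Real.sin θ ^ 2)) - s * Real.cos θ)) = s * Kel s - s := by
    rw [intervalIntegral.integral_sub
      (f := fun θ => s * (1 / Real.sqrt (1 - s * Real.sin θ ^ 2)))
      (g := fun θ => s * Real.cos θ)
      ((continuous_const.mul (contKint hs0 hs1)).intervalIntegrable _ _)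
      ((continuous_const.mul Real.continuous_cos).intervalIntegrable _ _),
      intervalIntegral.integral_const_mul, intervalIntegral.integral_const_mul]
    simp [Kel, integral_cos]
  rw [h2] at h
  exact h

lemma Kel_ge_log (hs0 : 0 ≤ s) (hs1 : s < 1) :
    Real.log (Real.sqrt (1-s) + π/2) - Real.log (Real.sqrt (1-s)) ≤ Kel s := by
  set r := Real.sqrt (1-s) with hrdef
  have hr : 0 < r := Real.sqrt_pos.mpr (by linarith)
  have hpos : ∀ θ ∈ Icc (0:ℝ) (π/2), 0 < r + π/2 - θ := by
    intro θ hθ; have := hθ.2; linarith [hr]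
  have hcont : ContinuousOn (fun θ : ℝ => (r + π/2 - θ)⁻¹) (Icc 0 (π/2)) := by
    apply ContinuousOn.inv₀
    · fun_prop
    · intro θ hθ; exact (hpos θ hθ).ne'
  have hint : IntervalIntegrable (fun θ : ℝ => (r + π/2 - θ)⁻¹) MeasureTheory.volume 0 (π/2) := by
    apply ContinuousOn.intervalIntegrable
    rwa [uIcc_of_le pi_half_nonneg]
  have hderiv : ∀ θ ∈ uIcc (0:ℝ) (π/2),
      HasDerivAt (fun t : ℝ => -Real.log (r + π/2 - t)) ((r + π/2 - θ)⁻¹) θ := by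
    intro θ hθ
    rw [uIcc_of_le pi_half_nonneg] at hθ
    have h1 : HasDerivAt (fun t : ℝ => r + π/2 - t) (-1) θ := by
      simpa using (hasDerivAt_id θ).const_sub (r + π/2)
    have h2 := (Real.hasDerivAt_log (hpos θ hθ).ne').comp θ h1
    have h3 := h2.neg
    exact h3.congr_deriv (by ring)
  have hcalc : (∫ θ in (0:ℝ)..(π/2), (r + π/2 - θ)⁻¹)
      = Real.log (r + π/2) - Real.log r := by
    rw [intervalIntegral.integral_eq_sub_of_hasDerivAt hderiv hint]
    have : r + π/2 - π/2 = r := by ring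
    rw [this]
    ring_nf
  have h := intervalIntegral.integral_mono_on (μ := MeasureTheory.volume) (a := (0:ℝ))
    (b := π/2) pi_half_nonneg hint ((contKint hs0 hs1).intervalIntegrable _ _)
    (fun θ hθ => by
      have hq := sqrtXpos hs0 hs1 θ
      have hub : Real.sqrt (1 - s * Real.sin θ ^ 2) ≤ r + π/2 - θ := by
        have h1 := sqrtX_le_cos_add hs0 hs1 hθ
        have h2 : Real.cos θ ≤ π/2 - θ := by
          have := Real.sin_le (x := π/2 - θ) (by linarith [hθ.2])
          rwa [Real.sin_pi_div_two_sub] at this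
        linarith
      rw [one_div]
      exact inv_anti₀ hq hub)
  rw [hcalc] at h
  exact h

end more

section param
variable {ν u1 u2 u3 : ℝ}

lemma one_sub_sCH (h3 : -ν < u3) (h2 : u3 < u2) (h21 : u2 < u1) :
    1 - sCH ν u1 u2 u3 = (u1-u2)*(u3+ν)/((u1-u3)*(u2+ν)) := by
  have h1 : (0:ℝ) < u1 - u3 := by linarith
  have h2' : (0:ℝ) < u2 + ν := by linarith
  rw [sCH]
  field_simp
  ring

lemma sCH_pos (h3 : -ν < u3) (h2 : u3 < u2) (h21 : u2 < u1) : 0 < sCH ν u1 u2 u3 := by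
  have h1 : (0:ℝ) < u1 - u3 := by linarith
  have h2' : (0:ℝ) < u2 + ν := by linarith
  have h4 : (0:ℝ) < u2 - u3 := by linarith
  have h5 : (0:ℝ) < u1 + ν := by linarith
  rw [sCH]; positivity

lemma sCH_lt_one (h3 : -ν < u3) (h2 : u3 < u2) (h21 : u2 < u1) : sCH ν u1 u2 u3 < 1 := by
  have h1 : (0:ℝ) < u1 - u3 := by linarith
  have h2' : (0:ℝ) < u2 + ν := by linarith
  have h4 : (0:ℝ) < u1 - u2 := by linarith
  have h5 : (0:ℝ) < u3 + ν := by linarith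
  have h := one_sub_sCH h3 h2 h21
  have : 0 < (u1-u2)*(u3+ν)/((u1-u3)*(u2+ν)) := by positivity
  linarith

lemma one_sub_rCH (h3 : -ν < u3) (h2 : u3 < u2) :
    1 - rCH ν u2 u3 = (u3+ν)/(u2+ν) := by
  have h2' : (0:ℝ) < u2 + ν := by linarith
  rw [rCH]
  field_simp
  ring

lemma rCH_nonneg (h3 : -ν < u3) (h2 : u3 < u2) : 0 ≤ rCH ν u2 u3 := by
  have h2' : (0:ℝ) < u2 + ν := by linarith
  have h4 : (0:ℝ) < u2 - u3 := by linarith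
  rw [rCH]; positivity

lemma rCH_lt_one (h3 : -ν < u3) (h2 : u3 < u2) : rCH ν u2 u3 < 1 := by
  have h2' : (0:ℝ) < u2 + ν := by linarith
  have h5 : (0:ℝ) < u3 + ν := by linarith
  have h := one_sub_rCH h3 h2
  have : 0 < (u3+ν)/(u2+ν) := by positivity
  linarith

end param

/-- The Whitham speed `λ_1` for the Camassa-Holm equation. -/
noncomputable def lam1 (ν u1 u2 u3 : ℝ) : ℝ :=
  u1 + u2 + u3 + 2 * ν +
    2 * (u1 - u2) * (u3 + ν) * Pel (rCH ν u2 u3) (sCH ν u1 u2 u3)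
      / ((u2 + ν) * Eel (sCH ν u1 u2 u3))

/-- The Whitham speed `λ_2` for the Camassa-Holm equation. -/
noncomputable def lam2 (ν u1 u2 u3 : ℝ) : ℝ :=
  u1 + u2 + u3 + 2 * ν +
    2 * (u3 - u2) * (1 - sCH ν u1 u2 u3) * Pel (rCH ν u2 u3) (sCH ν u1 u2 u3)
      / (Eel (sCH ν u1 u2 u3) - (1 - sCH ν u1 u2 u3) * Kel (sCH ν u1 u2 u3))

/-- The Whitham speed `λ_3` for the Camassa-Holm equation. -/
noncomputable def lam3 (ν u1 u2 u3 : ℝ) : ℝ :=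
  u1 + u2 + u3 + 2 * ν +
    2 * (u2 - u3) * (u3 + ν) * Pel (rCH ν u2 u3) (sCH ν u1 u2 u3)
      / ((u2 + ν) * (Eel (sCH ν u1 u2 u3) - Kel (sCH ν u1 u2 u3)))

set_option maxHeartbeats 1000000 in
/-- In the limit `u_2 → u_1⁻` (with `-ν < u_3 < u_1` fixed), the Whitham speeds
satisfy `λ_1, λ_2 → 2u_1 + u_3 + 2ν` and `λ_3 → 3u_3 + 2ν`. -/
theorem lam_leading_edge (ν u1 u3 : ℝ) (h3 : -ν < u3) (h31 : u3 < u1) :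
    Tendsto (fun u2 => lam1 ν u1 u2 u3) (𝓝[<] u1) (𝓝 (2 * u1 + u3 + 2 * ν)) ∧
    Tendsto (fun u2 => lam2 ν u1 u2 u3) (𝓝[<] u1) (𝓝 (2 * u1 + u3 + 2 * ν)) ∧
    Tendsto (fun u2 => lam3 ν u1 u2 u3) (𝓝[<] u1) (𝓝 (3 * u3 + 2 * ν)) := by
  have hν3 : (0:ℝ) < u3 + ν := by linarith
  have hν1 : (0:ℝ) < u1 + ν := by linarith
  have h13 : (0:ℝ) < u1 - u3 := by linarith
  have hev : ∀ᶠ u2 in 𝓝[<] u1, u2 ∈ Ioo u3 u1 :=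
    Ioo_mem_nhdsLT_of_mem ⟨h31, le_refl u1⟩
  -- limit of the parameter s
  have tS : Tendsto (fun u2 => sCH ν u1 u2 u3) (𝓝[<] u1) (𝓝 1) := by
    have hne : ((u1-u3)*(u1+ν)) ≠ 0 := by positivity
    have tnum : Tendsto (fun u2 : ℝ => (u2-u3)*(u1+ν)) (𝓝 u1) (𝓝 ((u1-u3)*(u1+ν))) :=
      Continuous.tendsto (by fun_prop) u1
    have tden : Tendsto (fun u2 : ℝ => (u1-u3)*(u2+ν)) (𝓝 u1) (𝓝 ((u1-u3)*(u1+ν))) :=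
      Continuous.tendsto (by fun_prop) u1
    have h := (tnum.div tden hne).mono_left (nhdsWithin_le_nhds (s := Iio u1))
    rw [div_self hne] at h
    exact h
  have t1S : Tendsto (fun u2 => 1 - sCH ν u1 u2 u3) (𝓝[<] u1) (𝓝 0) := by
    have := tendsto_const_nhds (x := (1:ℝ)) (f := 𝓝[<] u1) |>.sub tS
    simpa using this
  have tr : Tendsto (fun u2 => Real.sqrt (1 - sCH ν u1 u2 u3)) (𝓝[<] u1) (𝓝 0) := by
    have h := (Real.continuous_sqrt.tendsto 0).comp t1S
    simpa [Function.comp_def] using h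
  -- eventual basic facts
  have hevs : ∀ᶠ u2 in 𝓝[<] u1, 0 ≤ sCH ν u1 u2 u3 ∧ sCH ν u1 u2 u3 < 1 ∧
      0 ≤ rCH ν u2 u3 ∧ rCH ν u2 u3 < 1 := by
    filter_upwards [hev] with u2 hu
    exact ⟨(sCH_pos h3 hu.1 hu.2).le, sCH_lt_one h3 hu.1 hu.2,
      rCH_nonneg h3 hu.1, rCH_lt_one h3 hu.1⟩
  -- K → ∞  and 1/K → 0
  have trpos : Tendsto (fun u2 => Real.sqrt (1 - sCH ν u1 u2 u3)) (𝓝[<] u1) (𝓝[>] 0) := by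
    rw [tendsto_nhdsWithin_iff]
    refine ⟨tr, ?_⟩
    filter_upwards [hevs] with u2 hu
    exact Real.sqrt_pos.mpr (by linarith [hu.2.1])
  have tKtop : Tendsto (fun u2 => Kel (sCH ν u1 u2 u3)) (𝓝[<] u1) atTop := by
    apply tendsto_atTop_mono' (𝓝[<] u1)
      (f₁ := fun u2 => Real.log (Real.sqrt (1 - sCH ν u1 u2 u3) + π/2)
        - Real.log (Real.sqrt (1 - sCH ν u1 u2 u3)))
    · filter_upwards [hevs] with u2 hu
      exact Kel_ge_log hu.1 hu.2.1
    · have h1 : Tendsto (fun u2 => Real.log (Real.sqrt (1 - sCH ν u1 u2 u3) + π/2))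
          (𝓝[<] u1) (𝓝 (Real.log (0 + π/2))) := by
        apply (Real.continuousAt_log (by positivity)).tendsto.comp
        exact tr.add tendsto_const_nhds
      have h2 : Tendsto (fun u2 => Real.log (Real.sqrt (1 - sCH ν u1 u2 u3)))
          (𝓝[<] u1) atBot := Real.tendsto_log_nhdsGT_zero.comp trpos
      have h3' : Tendsto (fun u2 => -Real.log (Real.sqrt (1 - sCH ν u1 u2 u3)))
          (𝓝[<] u1) atTop := tendsto_neg_atTop_iff.mpr h2
      have := h1.add_atTop h3'
      simpa [sub_eq_add_neg] using this
  have tKinv : Tendsto (fun u2 => (Kel (sCH ν u1 u2 u3))⁻¹) (𝓝[<] u1) (𝓝 0) :=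
    tKtop.inv_tendsto_atTop
  -- limit of ρ
  have tR : Tendsto (fun u2 => rCH ν u2 u3) (𝓝[<] u1) (𝓝 ((u1-u3)/(u1+ν))) := by
    have tnum : Tendsto (fun u2 : ℝ => u2 - u3) (𝓝 u1) (𝓝 (u1-u3)) :=
      Continuous.tendsto (by fun_prop) u1
    have tden : Tendsto (fun u2 : ℝ => u2 + ν) (𝓝 u1) (𝓝 (u1+ν)) :=
      Continuous.tendsto (by fun_prop) u1
    exact (tnum.div tden hν1.ne').mono_left (nhdsWithin_le_nhds (s := Iio u1))
  have tgam : Tendsto (fun u2 : ℝ => u1 + u2 + u3 + 2*ν) (𝓝[<] u1)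
      (𝓝 (u1 + u1 + u3 + 2*ν)) :=
    (Continuous.tendsto (by fun_prop) u1).mono_left (nhdsWithin_le_nhds (s := Iio u1))
  refine ⟨?_, ?_, ?_⟩
  · -- λ1
    have key1 : Tendsto (fun u2 => 2 * (u1 - u2) * (u3 + ν) *
        Pel (rCH ν u2 u3) (sCH ν u1 u2 u3)
        / ((u2 + ν) * Eel (sCH ν u1 u2 u3))) (𝓝[<] u1) (𝓝 0) := by
      apply squeeze_zero_norm'
        (a := fun u2 => π * Real.sqrt ((u1-u2)*(u1-u3)*(u2+ν)/(u3+ν)))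
      · filter_upwards [hev] with u2 hu
        obtain ⟨h23, h21⟩ := hu
        have h2ν : (0:ℝ) < u2 + ν := by linarith
        have hs0 := (sCH_pos h3 h23 h21).le
        have hs1 := sCH_lt_one h3 h23 h21
        have hρ0 := rCH_nonneg h3 h23
        have hρ1 := rCH_lt_one h3 h23
        have hr : 0 < Real.sqrt (1 - sCH ν u1 u2 u3) := Real.sqrt_pos.mpr (by linarith)
        have hr2 : Real.sqrt (1 - sCH ν u1 u2 u3) ^ 2 = 1 - sCH ν u1 u2 u3 :=
          Real.sq_sqrt (by linarith)
        have hP0 : 0 ≤ Pel (rCH ν u2 u3) (sCH ν u1 u2 u3) := Pel_nonneg hs0 hs1 hρ0 hρ1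
        have hE1 : 1 ≤ Eel (sCH ν u1 u2 u3) := Eel_ge hs0 hs1
        have hρpos : 0 < 1 - rCH ν u2 u3 := by linarith
        have h12 : (0:ℝ) < u1 - u2 := by linarith
        have hPle : Pel (rCH ν u2 u3) (sCH ν u1 u2 u3)
            ≤ (π/2) / ((1 - rCH ν u2 u3) * Real.sqrt (1 - sCH ν u1 u2 u3)) := by
          calc Pel (rCH ν u2 u3) (sCH ν u1 u2 u3)
              ≤ Kel (sCH ν u1 u2 u3) / (1 - rCH ν u2 u3) := Pel_le_Kel hs0 hs1 hρ0 hρ1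
            _ ≤ ((π/2)/Real.sqrt (1 - sCH ν u1 u2 u3)) / (1 - rCH ν u2 u3) := by
                gcongr
                exact Kel_le hs0 hs1
            _ = (π/2) / ((1 - rCH ν u2 u3) * Real.sqrt (1 - sCH ν u1 u2 u3)) := by
                rw [div_div]; ring_nf
        have hT1pos : 0 ≤ 2 * (u1 - u2) * (u3 + ν) * Pel (rCH ν u2 u3) (sCH ν u1 u2 u3)
            / ((u2 + ν) * Eel (sCH ν u1 u2 u3)) := by positivity
        rw [Real.norm_eq_abs, abs_of_nonneg hT1pos]
        have step1 : 2 * (u1 - u2) * (u3 + ν) * Pel (rCH ν u2 u3) (sCH ν u1 u2 u3)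
            / ((u2 + ν) * Eel (sCH ν u1 u2 u3))
            ≤ 2 * (u1 - u2) * (u3 + ν) *
              ((π/2) / ((1 - rCH ν u2 u3) * Real.sqrt (1 - sCH ν u1 u2 u3)))
              / ((u2 + ν) * 1) := by
          gcongr
        have e1 : 2 * (u1 - u2) * (u3 + ν) *
              ((π/2) / ((1 - rCH ν u2 u3) * Real.sqrt (1 - sCH ν u1 u2 u3)))
              / ((u2 + ν) * 1)
            = π * ((u1 - u2) / Real.sqrt (1 - sCH ν u1 u2 u3)) := by
          rw [one_sub_rCH h3 h23]
          field_simp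
        have hsq : ((u1-u2)/Real.sqrt (1 - sCH ν u1 u2 u3))^2
            = (u1-u2)*(u1-u3)*(u2+ν)/(u3+ν) := by
          rw [div_pow, hr2, one_sub_sCH h3 h23 h21]
          have n1 : (u1-u2) ≠ 0 := by positivity
          have n2 : (u3+ν) ≠ 0 := by positivity
          have n3 : (u1-u3) ≠ 0 := by positivity
          have n4 : (u2+ν) ≠ 0 := by positivity
          field_simp
        have e2 : π * Real.sqrt ((u1-u2)*(u1-u3)*(u2+ν)/(u3+ν))
            = π * ((u1-u2)/Real.sqrt (1 - sCH ν u1 u2 u3)) := by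
          rw [← hsq, Real.sqrt_sq (by positivity)]
        rw [e2]
        calc _ ≤ _ := step1
          _ = _ := e1
      · have h0 : Tendsto (fun u2 : ℝ => (u1-u2)*(u1-u3)*(u2+ν)/(u3+ν)) (𝓝 u1) (𝓝 0) := by
          have hc : Continuous fun u2 : ℝ => (u1-u2)*(u1-u3)*(u2+ν)/(u3+ν) := by fun_prop
          have := hc.tendsto u1
          simpa using this
        have h1 := (Real.continuous_sqrt.tendsto 0).comp (h0.mono_left
          (nhdsWithin_le_nhds (s := Iio u1)))
        have h2 := h1.const_mul π
        simpa using h2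
    have hval : (2*u1+u3+2*ν) = (u1+u1+u3+2*ν) + 0 := by ring
    rw [show 𝓝 (2*u1+u3+2*ν) = 𝓝 ((u1+u1+u3+2*ν) + 0) by rw [← hval]]
    have final := tgam.add key1
    simp only [lam1]
    exact final
  · -- λ2
    have hsm : ∀ᶠ u2 in 𝓝[<] u1, (π/2) * Real.sqrt (1 - sCH ν u1 u2 u3) < 1/2 := by
      have h := tr.const_mul (π/2)
      rw [mul_zero] at h
      exact h.eventually_lt_const (by norm_num)
    have key2 : Tendsto (fun u2 => 2 * (u3 - u2) * (1 - sCH ν u1 u2 u3) *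
        Pel (rCH ν u2 u3) (sCH ν u1 u2 u3)
        / (Eel (sCH ν u1 u2 u3) - (1 - sCH ν u1 u2 u3) * Kel (sCH ν u1 u2 u3)))
        (𝓝[<] u1) (𝓝 0) := by
      apply squeeze_zero_norm'
        (a := fun u2 => (2*π*(u2-u3)*(u2+ν)/(u3+ν)) * Real.sqrt (1 - sCH ν u1 u2 u3))
      · filter_upwards [hev, hsm] with u2 hu hsmall
        obtain ⟨h23, h21⟩ := hu
        have h2ν : (0:ℝ) < u2 + ν := by linarith
        have hs0 := (sCH_pos h3 h23 h21).le
        have hs1 := sCH_lt_one h3 h23 h21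
        have hρ0 := rCH_nonneg h3 h23
        have hρ1 := rCH_lt_one h3 h23
        have hρpos : 0 < 1 - rCH ν u2 u3 := by linarith
        have hr : 0 < Real.sqrt (1 - sCH ν u1 u2 u3) := Real.sqrt_pos.mpr (by linarith)
        have hr2 : Real.sqrt (1 - sCH ν u1 u2 u3) ^ 2 = 1 - sCH ν u1 u2 u3 :=
          Real.sq_sqrt (by linarith)
        have hP0 : 0 ≤ Pel (rCH ν u2 u3) (sCH ν u1 u2 u3) := Pel_nonneg hs0 hs1 hρ0 hρ1
        have hE1 : 1 ≤ Eel (sCH ν u1 u2 u3) := Eel_ge hs0 hs1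
        have hPle : Pel (rCH ν u2 u3) (sCH ν u1 u2 u3)
            ≤ (π/2) / ((1 - rCH ν u2 u3) * Real.sqrt (1 - sCH ν u1 u2 u3)) := by
          calc Pel (rCH ν u2 u3) (sCH ν u1 u2 u3)
              ≤ Kel (sCH ν u1 u2 u3) / (1 - rCH ν u2 u3) := Pel_le_Kel hs0 hs1 hρ0 hρ1
            _ ≤ ((π/2)/Real.sqrt (1 - sCH ν u1 u2 u3)) / (1 - rCH ν u2 u3) := by
                gcongr
                exact Kel_le hs0 hs1
            _ = (π/2) / ((1 - rCH ν u2 u3) * Real.sqrt (1 - sCH ν u1 u2 u3)) := by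
                rw [div_div]; ring_nf
        have h1SK : (1 - sCH ν u1 u2 u3) * Kel (sCH ν u1 u2 u3)
            ≤ (π/2) * Real.sqrt (1 - sCH ν u1 u2 u3) := by
          calc (1 - sCH ν u1 u2 u3) * Kel (sCH ν u1 u2 u3)
              ≤ (1 - sCH ν u1 u2 u3) * ((π/2)/Real.sqrt (1 - sCH ν u1 u2 u3)) := by
                gcongr
                · exact Kel_le hs0 hs1
            _ = (π/2) * ((1 - sCH ν u1 u2 u3)/Real.sqrt (1 - sCH ν u1 u2 u3)) := by ring
            _ = (π/2) * Real.sqrt (1 - sCH ν u1 u2 u3) := by rw [Real.div_sqrt]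
        have hD : 1/2 ≤ Eel (sCH ν u1 u2 u3)
            - (1 - sCH ν u1 u2 u3) * Kel (sCH ν u1 u2 u3) := by linarith
        have hDpos : 0 < Eel (sCH ν u1 u2 u3)
            - (1 - sCH ν u1 u2 u3) * Kel (sCH ν u1 u2 u3) := by linarith
        have hnum : 2 * (u3 - u2) * (1 - sCH ν u1 u2 u3) *
            Pel (rCH ν u2 u3) (sCH ν u1 u2 u3) ≤ 0 :=
          mul_nonpos_of_nonpos_of_nonneg
            (mul_nonpos_of_nonpos_of_nonneg (by linarith) (by linarith)) hP0
        have hT2 : 2 * (u3 - u2) * (1 - sCH ν u1 u2 u3) *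
            Pel (rCH ν u2 u3) (sCH ν u1 u2 u3)
            / (Eel (sCH ν u1 u2 u3) - (1 - sCH ν u1 u2 u3) * Kel (sCH ν u1 u2 u3)) ≤ 0 :=
          div_nonpos_of_nonpos_of_nonneg hnum hDpos.le
        rw [Real.norm_eq_abs, abs_of_nonpos hT2]
        have hnum' : 0 ≤ 2 * (u2 - u3) * (1 - sCH ν u1 u2 u3) *
            Pel (rCH ν u2 u3) (sCH ν u1 u2 u3) :=
          mul_nonneg (mul_nonneg (by linarith) (by linarith)) hP0
        have hneg : -(2 * (u3 - u2) * (1 - sCH ν u1 u2 u3) *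
            Pel (rCH ν u2 u3) (sCH ν u1 u2 u3)
            / (Eel (sCH ν u1 u2 u3) - (1 - sCH ν u1 u2 u3) * Kel (sCH ν u1 u2 u3)))
            = 2 * (u2 - u3) * (1 - sCH ν u1 u2 u3) *
            Pel (rCH ν u2 u3) (sCH ν u1 u2 u3)
            / (Eel (sCH ν u1 u2 u3) - (1 - sCH ν u1 u2 u3) * Kel (sCH ν u1 u2 u3)) := by
          ring
        rw [hneg]
        calc 2 * (u2 - u3) * (1 - sCH ν u1 u2 u3) * Pel (rCH ν u2 u3) (sCH ν u1 u2 u3)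
              / (Eel (sCH ν u1 u2 u3) - (1 - sCH ν u1 u2 u3) * Kel (sCH ν u1 u2 u3))
            ≤ 2 * (u2 - u3) * (1 - sCH ν u1 u2 u3) * Pel (rCH ν u2 u3) (sCH ν u1 u2 u3)
              / (1/2) := by
              apply div_le_div_of_nonneg_left hnum' (by norm_num) hD
          _ = 4 * (u2 - u3) * (1 - sCH ν u1 u2 u3) * Pel (rCH ν u2 u3) (sCH ν u1 u2 u3) := by
              ring
          _ ≤ 4 * (u2 - u3) * (1 - sCH ν u1 u2 u3) *
              ((π/2) / ((1 - rCH ν u2 u3) * Real.sqrt (1 - sCH ν u1 u2 u3))) := by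
              apply mul_le_mul_of_nonneg_left hPle
              have : (0:ℝ) < u2 - u3 := by linarith
              have h1s : (0:ℝ) ≤ 1 - sCH ν u1 u2 u3 := by linarith
              positivity
          _ = (2*π*(u2-u3)/(1 - rCH ν u2 u3)) *
              ((1 - sCH ν u1 u2 u3)/Real.sqrt (1 - sCH ν u1 u2 u3)) := by
              set q := Real.sqrt (1 - sCH ν u1 u2 u3) with hqd
              set x := 1 - sCH ν u1 u2 u3 with hxd
              set y := 1 - rCH ν u2 u3 with hyd
              field_simp
              ring
          _ = (2*π*(u2-u3)/(1 - rCH ν u2 u3)) * Real.sqrt (1 - sCH ν u1 u2 u3) := by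
              rw [Real.div_sqrt]
          _ = (2*π*(u2-u3)*(u2+ν)/(u3+ν)) * Real.sqrt (1 - sCH ν u1 u2 u3) := by
              rw [one_sub_rCH h3 h23, div_div_eq_mul_div]
      · have hc : Tendsto (fun u2 : ℝ => 2*π*(u2-u3)*(u2+ν)/(u3+ν)) (𝓝[<] u1)
            (𝓝 (2*π*(u1-u3)*(u1+ν)/(u3+ν))) :=
          (Continuous.tendsto (by fun_prop) u1).mono_left (nhdsWithin_le_nhds (s := Iio u1))
        have := hc.mul tr
        simpa using this
    have hval : (2*u1+u3+2*ν) = (u1+u1+u3+2*ν) + 0 := by ring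
    rw [show 𝓝 (2*u1+u3+2*ν) = 𝓝 ((u1+u1+u3+2*ν) + 0) by rw [← hval]]
    have final := tgam.add key2
    simp only [lam2]
    exact final
  · -- λ3
    have hρ1lt : (u1-u3)/(u1+ν) < 1 := by rw [div_lt_one hν1]; linarith
    have hρ1pos : 0 < 1 - (u1-u3)/(u1+ν) := by linarith
    have t1R : Tendsto (fun u2 => 1 - rCH ν u2 u3) (𝓝[<] u1)
        (𝓝 (1 - (u1-u3)/(u1+ν))) := tendsto_const_nhds.sub tR
    have tfrac : Tendsto (fun u2 => 1/(1 - rCH ν u2 u3)) (𝓝[<] u1)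
        (𝓝 (1/(1 - (u1-u3)/(u1+ν)))) := tendsto_const_nhds.div t1R hρ1pos.ne'
    have tA : Tendsto (fun u2 => 1/(1 - rCH ν u2 u3)
        - (rCH ν u2 u3/(1 - rCH ν u2 u3)^2) * (Kel (sCH ν u1 u2 u3))⁻¹) (𝓝[<] u1)
        (𝓝 (1/(1 - (u1-u3)/(u1+ν)))) := by
      have h2 : Tendsto (fun u2 => (rCH ν u2 u3/(1 - rCH ν u2 u3)^2) *
          (Kel (sCH ν u1 u2 u3))⁻¹) (𝓝[<] u1)
          (𝓝 (((u1-u3)/(u1+ν)/(1 - (u1-u3)/(u1+ν))^2) * 0)) :=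
        (tR.div (t1R.pow 2) (pow_ne_zero 2 hρ1pos.ne')).mul tKinv
      rw [mul_zero] at h2
      simpa using tfrac.sub h2
    have tPK : Tendsto (fun u2 => Pel (rCH ν u2 u3) (sCH ν u1 u2 u3) /
        Kel (sCH ν u1 u2 u3)) (𝓝[<] u1) (𝓝 (1/(1 - (u1-u3)/(u1+ν)))) := by
      apply tendsto_of_tendsto_of_tendsto_of_le_of_le' tA tfrac
      · filter_upwards [hev] with u2 hu
        obtain ⟨h23, h21⟩ := hu
        have hs0 := (sCH_pos h3 h23 h21).le
        have hs1 := sCH_lt_one h3 h23 h21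
        have hρ0 := rCH_nonneg h3 h23
        have hρ1 := rCH_lt_one h3 h23
        have hρpos : 0 < 1 - rCH ν u2 u3 := by linarith
        have hK : 0 < Kel (sCH ν u1 u2 u3) :=
          lt_of_lt_of_le (by positivity) (Kel_ge hs0 hs1)
        have e : 1/(1 - rCH ν u2 u3) - (rCH ν u2 u3/(1 - rCH ν u2 u3)^2) *
            (Kel (sCH ν u1 u2 u3))⁻¹
            = (Kel (sCH ν u1 u2 u3)/(1 - rCH ν u2 u3)
              - rCH ν u2 u3/(1 - rCH ν u2 u3)^2) / Kel (sCH ν u1 u2 u3) := by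
          field_simp
        rw [e]
        exact (div_le_div_iff_of_pos_right hK).mpr (Pel_ge hs0 hs1 hρ0 hρ1)
      · filter_upwards [hev] with u2 hu
        obtain ⟨h23, h21⟩ := hu
        have hs0 := (sCH_pos h3 h23 h21).le
        have hs1 := sCH_lt_one h3 h23 h21
        have hρ0 := rCH_nonneg h3 h23
        have hρ1 := rCH_lt_one h3 h23
        have hρpos : 0 < 1 - rCH ν u2 u3 := by linarith
        have hK : 0 < Kel (sCH ν u1 u2 u3) :=
          lt_of_lt_of_le (by positivity) (Kel_ge hs0 hs1)
        have e : (1:ℝ)/(1 - rCH ν u2 u3)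
            = (Kel (sCH ν u1 u2 u3)/(1 - rCH ν u2 u3)) / Kel (sCH ν u1 u2 u3) := by
          field_simp
        rw [e]
        exact (div_le_div_iff_of_pos_right hK).mpr (Pel_le_Kel hs0 hs1 hρ0 hρ1)
    have tKE : Tendsto (fun u2 => (Kel (sCH ν u1 u2 u3) - Eel (sCH ν u1 u2 u3)) /
        Kel (sCH ν u1 u2 u3)) (𝓝[<] u1) (𝓝 1) := by
      have tlow : Tendsto (fun u2 => sCH ν u1 u2 u3 - sCH ν u1 u2 u3 *
          (Kel (sCH ν u1 u2 u3))⁻¹) (𝓝[<] u1) (𝓝 1) := by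
        have := tS.sub (tS.mul tKinv)
        simpa using this
      apply tendsto_of_tendsto_of_tendsto_of_le_of_le' tlow tS
      · filter_upwards [hev] with u2 hu
        obtain ⟨h23, h21⟩ := hu
        have hs0 := (sCH_pos h3 h23 h21).le
        have hs1 := sCH_lt_one h3 h23 h21
        have hK : 0 < Kel (sCH ν u1 u2 u3) :=
          lt_of_lt_of_le (by positivity) (Kel_ge hs0 hs1)
        have e : sCH ν u1 u2 u3 - sCH ν u1 u2 u3 * (Kel (sCH ν u1 u2 u3))⁻¹
            = (sCH ν u1 u2 u3 * Kel (sCH ν u1 u2 u3) - sCH ν u1 u2 u3) /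
              Kel (sCH ν u1 u2 u3) := by
          field_simp
        rw [e]
        exact (div_le_div_iff_of_pos_right hK).mpr (KsubE_ge hs0 hs1)
      · filter_upwards [hev] with u2 hu
        obtain ⟨h23, h21⟩ := hu
        have hs0 := (sCH_pos h3 h23 h21).le
        have hs1 := sCH_lt_one h3 h23 h21
        have hK : 0 < Kel (sCH ν u1 u2 u3) :=
          lt_of_lt_of_le (by positivity) (Kel_ge hs0 hs1)
        calc (Kel (sCH ν u1 u2 u3) - Eel (sCH ν u1 u2 u3)) / Kel (sCH ν u1 u2 u3)
            ≤ (sCH ν u1 u2 u3 * Kel (sCH ν u1 u2 u3)) / Kel (sCH ν u1 u2 u3) :=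
              (div_le_div_iff_of_pos_right hK).mpr (KsubE_le hs0 hs1)
          _ = sCH ν u1 u2 u3 := by rw [mul_div_assoc, div_self hK.ne', mul_one]
    have tc : Tendsto (fun u2 : ℝ => -(2*(u2-u3)*(u3+ν)/(u2+ν))) (𝓝[<] u1)
        (𝓝 (-(2*(u1-u3)*(u3+ν)/(u1+ν)))) := by
      have hc : Continuous fun u2 : ℝ => (2*(u2-u3)*(u3+ν)) := by fun_prop
      have hd : Continuous fun u2 : ℝ => (u2+ν) := by fun_prop
      exact (((hc.tendsto u1).div (hd.tendsto u1) hν1.ne').neg).mono_left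
        (nhdsWithin_le_nhds (s := Iio u1))
    have key3' := tc.mul (tPK.div tKE one_ne_zero)
    have hvl : -(2*(u1-u3)*(u3+ν)/(u1+ν)) * (1/(1 - (u1-u3)/(u1+ν))/1)
        = -(2*(u1-u3)) := by
      rw [show 1 - (u1-u3)/(u1+ν) = (u3+ν)/(u1+ν) by field_simp; ring]
      field_simp
    rw [hvl] at key3'
    have key3 : Tendsto (fun u2 => 2 * (u2 - u3) * (u3 + ν) *
        Pel (rCH ν u2 u3) (sCH ν u1 u2 u3)
        / ((u2 + ν) * (Eel (sCH ν u1 u2 u3) - Kel (sCH ν u1 u2 u3)))) (𝓝[<] u1)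
        (𝓝 (-(2*(u1-u3)))) := by
      apply key3'.congr'
      filter_upwards [hev] with u2 hu
      obtain ⟨h23, h21⟩ := hu
      have h2ν : (0:ℝ) < u2 + ν := by linarith
      have hs0 := (sCH_pos h3 h23 h21).le
      have hspos := sCH_pos h3 h23 h21
      have hs1 := sCH_lt_one h3 h23 h21
      have hK1 : 1 < Kel (sCH ν u1 u2 u3) := by
        have := Kel_ge hs0 hs1
        have := Real.pi_gt_three
        linarith
      have hK : 0 < Kel (sCH ν u1 u2 u3) := by linarith
      have hKE : 0 < Kel (sCH ν u1 u2 u3) - Eel (sCH ν u1 u2 u3) := by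
        have h1 := KsubE_ge hs0 hs1
        have h2 : 0 < sCH ν u1 u2 u3 * (Kel (sCH ν u1 u2 u3) - 1) :=
          mul_pos hspos (by linarith)
        have h4 : sCH ν u1 u2 u3 * Kel (sCH ν u1 u2 u3) - sCH ν u1 u2 u3
            = sCH ν u1 u2 u3 * (Kel (sCH ν u1 u2 u3) - 1) := by ring
        linarith
      have hEK : Eel (sCH ν u1 u2 u3) - Kel (sCH ν u1 u2 u3) ≠ 0 := by
        intro h; rw [sub_eq_zero] at h; rw [h] at hKE; linarith
      set P := Pel (rCH ν u2 u3) (sCH ν u1 u2 u3) with hPd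
      set K := Kel (sCH ν u1 u2 u3) with hKd
      set E := Eel (sCH ν u1 u2 u3) with hEd
      show -(2*(u2-u3)*(u3+ν)/(u2+ν)) * ((P/K)/((K-E)/K))
          = 2*(u2-u3)*(u3+ν)*P/((u2+ν)*(E-K))
      rw [div_div_div_cancel_right₀ hK.ne' P (K-E)]
      field_simp [h2ν.ne', hEK, hKE.ne']
      ring
    have hval : (3*u3+2*ν) = (u1+u1+u3+2*ν) + (-(2*(u1-u3))) := by ring
    rw [show 𝓝 (3*u3+2*ν) = 𝓝 ((u1+u1+u3+2*ν) + (-(2*(u1-u3)))) by rw [← hval]]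
    have final := tgam.add key3
    simp only [lam3]
    exact final
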